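/- Let σ be a closed line segment in ℝ³ contained in some line L(θ₀) of the first ruling of the hyperboloid of one sheet S. Then the set {φ ∈ ℝ : M(φ) meets σ} is invariant under φ ↦ φ + 2π, and its image in the circle AddCircle (2π) under the quotient map ℝ → AddCircle (2π) is a connected subset of AddCircle (2π). -/

import Mathlib

open Set

noncomputable section

/-- The line in ℝ³ through `a` with direction `v`. -/
def lineThrough (a v : ℝ × ℝ × ℝ) : Set (ℝ × ℝ × ℝ) :=
  {p | ∃ r : ℝ, p = a + r • v}

/-- `L` is a line in ℝ³. -/
def IsLine (L : Set (ℝ × ℝ × ℝ)) : Prop :=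
  ∃ a v : ℝ × ℝ × ℝ, v ≠ 0 ∧ L = lineThrough a v

/-- `L` is a transversal to the family of sets `s`: it is a line meeting every `s i`. -/
def IsTransversal {n : ℕ} (s : Fin n → Set (ℝ × ℝ × ℝ)) (L : Set (ℝ × ℝ × ℝ)) : Prop :=
  IsLine L ∧ ∀ i, (L ∩ s i).Nonempty

/-- Two transversals `L₀`, `L₁` to the family `s` lie in the same connected component of
transversals: one can be moved continuously to the other while remaining a transversal. -/
def SameComp {n : ℕ} (s : Fin n → Set (ℝ × ℝ × ℝ)) (L₀ L₁ : Set (ℝ × ℝ × ℝ)) : Prop :=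
  ∃ a v : ℝ → ℝ × ℝ × ℝ,
    ContinuousOn a (Icc 0 1) ∧ ContinuousOn v (Icc 0 1) ∧
    (∀ t ∈ Icc (0:ℝ) 1, v t ≠ 0) ∧
    (∀ t ∈ Icc (0:ℝ) 1, ∀ i, (lineThrough (a t) (v t) ∩ s i).Nonempty) ∧
    lineThrough (a 0) (v 0) = L₀ ∧ lineThrough (a 1) (v 1) = L₁

/-- The line `L(θ)` of the first ruling of the hyperboloid `x² + y² − z² = 1`. -/
def Lrul (θ : ℝ) : Set (ℝ × ℝ × ℝ) :=
  {p | ∃ t : ℝ, p = (Real.cos θ - t * Real.sin θ, Real.sin θ + t * Real.cos θ, t)}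

/-- The line `M(θ)` of the second ruling of the hyperboloid `x² + y² − z² = 1`. -/
def Mrul (θ : ℝ) : Set (ℝ × ℝ × ℝ) :=
  {p | ∃ t : ℝ, p = (Real.cos θ - t * Real.sin θ, Real.sin θ + t * Real.cos θ, -t)}

namespace Stmt9Aux

noncomputable def P (θ t : ℝ) : ℝ × ℝ × ℝ :=
  (Real.cos θ - t * Real.sin θ, Real.sin θ + t * Real.cos θ, t)

def Mrul' (θ : ℝ) : Set (ℝ × ℝ × ℝ) :=
  {p | ∃ t : ℝ, p = (Real.cos θ - t * Real.sin θ, Real.sin θ + t * Real.cos θ, -t)}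

lemma mem_Mrul_iff (θ φ t : ℝ) :
    P θ t ∈ Mrul' φ ↔ Real.sin ((φ - θ)/2) = t * Real.cos ((φ - θ)/2) := by
  set u := (φ + θ)/2 with hu
  set d := (φ - θ)/2 with hd
  have hθ : θ = u - d := by rw [hu, hd]; ring
  have hφ : φ = u + d := by rw [hu, hd]; ring
  constructor
  · rintro ⟨s, hs⟩
    rw [P, Prod.ext_iff, Prod.ext_iff] at hs
    obtain ⟨h1, h2, h3⟩ := hs
    dsimp only at h1 h2 h3
    have hs' : s = -t := by linarith
    subst hs'
    rw [hθ, hφ] at h1 h2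
    rw [Real.cos_sub, Real.sin_sub, Real.cos_add, Real.sin_add] at h1 h2
    linear_combination (Real.sin u/2) * h1 - (Real.cos u/2) * h2 +
      (t * Real.cos d - Real.sin d) * (Real.sin_sq_add_cos_sq u)
  · intro h
    refine ⟨-t, ?_⟩
    rw [P, Prod.ext_iff, Prod.ext_iff]
    refine ⟨?_, ?_, by dsimp only; ring⟩ <;> dsimp only <;>
      rw [hθ, hφ, Real.cos_sub, Real.sin_sub, Real.cos_add, Real.sin_add]
    · linear_combination (2 * Real.sin u) * h
    · linear_combination (-2 * Real.cos u) * h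

lemma mem_segment_iff (θ a b : ℝ) (p : ℝ × ℝ × ℝ) :
    p ∈ segment ℝ (P θ a) (P θ b) ↔ ∃ t ∈ segment ℝ a b, p = P θ t := by
  constructor
  · rintro ⟨u, v, hu, hv, huv, rfl⟩
    refine ⟨u * a + v * b, ⟨u, v, hu, hv, huv, rfl⟩, ?_⟩
    simp only [P, Prod.smul_mk, Prod.mk_add_mk, smul_eq_mul, Prod.mk.injEq]
    exact ⟨by linear_combination (Real.cos θ) * huv,
      by linear_combination (Real.sin θ) * huv, trivial⟩
  · rintro ⟨t, ⟨u, v, hu, hv, huv, rfl⟩, rfl⟩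
    refine ⟨u, v, hu, hv, huv, ?_⟩
    simp only [P, Prod.smul_mk, Prod.mk_add_mk, smul_eq_mul, Prod.mk.injEq]
    exact ⟨by linear_combination (Real.cos θ) * huv,
      by linear_combination (Real.sin θ) * huv, trivial⟩

end Stmt9Aux

/-- for a segment contained in a line `L(θ₀)` of the first ruling, the set of
`φ` with `M(φ)` meeting the segment is `2π`-periodic and its image in the circle
`AddCircle (2π)` is connected. -/
theorem stmt_9 (x y : ℝ × ℝ × ℝ) (θ₀ : ℝ) (hσ : segment ℝ x y ⊆ Lrul θ₀) :
    (∀ φ : ℝ, φ + 2 * Real.pi ∈ {φ : ℝ | (Mrul φ ∩ segment ℝ x y).Nonempty} ↔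
      φ ∈ {φ : ℝ | (Mrul φ ∩ segment ℝ x y).Nonempty}) ∧
    IsConnected ((fun φ : ℝ => (φ : AddCircle (2 * Real.pi))) ''
      {φ : ℝ | (Mrul φ ∩ segment ℝ x y).Nonempty}) := by
  obtain ⟨a, ha⟩ := hσ (left_mem_segment ℝ x y)
  obtain ⟨b, hb⟩ := hσ (right_mem_segment ℝ x y)
  have hxP : x = Stmt9Aux.P θ₀ a := ha
  have hyP : y = Stmt9Aux.P θ₀ b := hb
  have hSchar : ∀ φ : ℝ, (Mrul φ ∩ segment ℝ x y).Nonempty ↔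
      ∃ t ∈ segment ℝ a b, Real.sin ((φ - θ₀)/2) = t * Real.cos ((φ - θ₀)/2) := by
    intro φ
    constructor
    · rintro ⟨p, hpM, hpseg⟩
      rw [hxP, hyP, Stmt9Aux.mem_segment_iff] at hpseg
      obtain ⟨t, ht, rfl⟩ := hpseg
      exact ⟨t, ht, (Stmt9Aux.mem_Mrul_iff θ₀ φ t).1 hpM⟩
    · rintro ⟨t, ht, h⟩
      refine ⟨Stmt9Aux.P θ₀ t, (Stmt9Aux.mem_Mrul_iff θ₀ φ t).2 h, ?_⟩
      rw [hxP, hyP, Stmt9Aux.mem_segment_iff]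
      exact ⟨t, ht, rfl⟩
  constructor
  · intro φ
    simp only [mem_setOf_eq, hSchar]
    have hdd : (φ + 2 * Real.pi - θ₀)/2 = (φ - θ₀)/2 + Real.pi := by ring
    refine exists_congr fun t => and_congr_right fun _ => ?_
    rw [hdd, Real.sin_add_pi, Real.cos_add_pi]
    constructor <;> intro h <;> linarith
  · set m := min a b with hm
    set Mx := max a b with hMx
    have hseg : segment ℝ a b = Icc m Mx := by
      rw [segment_eq_uIcc]; rfl
    set c₁ := θ₀ + 2 * Real.arctan m with hc₁
    set c₂ := θ₀ + 2 * Real.arctan Mx with hc₂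
    have hc : c₁ ≤ c₂ := by
      have := Real.arctan_strictMono.monotone (min_le_max (a := a) (b := b))
      rw [hc₁, hc₂]; linarith
    have hJS : Icc c₁ c₂ ⊆ {φ : ℝ | (Mrul φ ∩ segment ℝ x y).Nonempty} := by
      intro φ hφ
      rw [mem_setOf_eq, hSchar]
      set d := (φ - θ₀)/2 with hdd
      have hd1 : Real.arctan m ≤ d := by rw [hdd]; rw [hc₁] at hφ; linarith [hφ.1]
      have hd2 : d ≤ Real.arctan Mx := by rw [hdd]; rw [hc₂] at hφ; linarith [hφ.2]
      have hdo : d ∈ Ioo (-(Real.pi/2)) (Real.pi/2) :=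
        ⟨lt_of_lt_of_le (Real.arctan_mem_Ioo m).1 hd1,
         lt_of_le_of_lt hd2 (Real.arctan_mem_Ioo Mx).2⟩
      have hcos : 0 < Real.cos d := Real.cos_pos_of_mem_Ioo hdo
      refine ⟨Real.tan d, ?_, ?_⟩
      · rw [hseg]
        constructor
        · have := Real.strictMonoOn_tan.monotoneOn (Real.arctan_mem_Ioo m) hdo hd1
          rwa [Real.tan_arctan] at this
        · have := Real.strictMonoOn_tan.monotoneOn hdo (Real.arctan_mem_Ioo Mx) hd2
          rwa [Real.tan_arctan] at this
      · rw [Real.tan_eq_sin_div_cos]; field_simp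
    have himg : ((fun φ : ℝ => (φ : AddCircle (2 * Real.pi))) ''
        {φ : ℝ | (Mrul φ ∩ segment ℝ x y).Nonempty}) =
        ((fun φ : ℝ => (φ : AddCircle (2 * Real.pi))) '' Icc c₁ c₂) := by
      apply Subset.antisymm
      · rintro _ ⟨φ, hφ, rfl⟩
        rw [mem_setOf_eq, hSchar] at hφ
        obtain ⟨t, ht, hC⟩ := hφ
        rw [hseg] at ht
        set d := (φ - θ₀)/2 with hdd
        have hcosd : Real.cos d ≠ 0 := by
          intro h0
          have h1 : Real.sin d = 0 := by rw [hC, h0, mul_zero]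
          have h2 := Real.sin_sq_add_cos_sq d
          rw [h0, h1] at h2; norm_num at h2
        set d' := toIocMod Real.pi_pos (-(Real.pi/2)) d with hd'
        have hmem : d' ∈ Ioc (-(Real.pi/2)) (-(Real.pi/2) + Real.pi) :=
          toIocMod_mem_Ioc _ _ _
        set k := toIocDiv Real.pi_pos (-(Real.pi/2)) d with hk
        have hdk : d = d' + (k : ℝ) * Real.pi := by
          have h := self_sub_toIocMod Real.pi_pos (-(Real.pi/2)) d
          rw [← hd', ← hk, zsmul_eq_mul] at h
          linarith
        have hsink : Real.sin ((k : ℝ) * Real.pi) = 0 := Real.sin_int_mul_pi k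
        have hcosk : Real.cos ((k : ℝ) * Real.pi) ≠ 0 := by
          intro hc0
          have h2 := Real.sin_sq_add_cos_sq ((k : ℝ) * Real.pi)
          rw [hsink, hc0] at h2; norm_num at h2
        have hsin : Real.sin d = Real.sin d' * Real.cos ((k : ℝ) * Real.pi) := by
          rw [hdk, Real.sin_add, hsink]; ring
        have hcos' : Real.cos d = Real.cos d' * Real.cos ((k : ℝ) * Real.pi) := by
          rw [hdk, Real.cos_add, hsink]; ring
        have hC' : Real.sin d' = t * Real.cos d' := by
          have h3 : Real.sin d' * Real.cos ((k : ℝ) * Real.pi) =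
              (t * Real.cos d') * Real.cos ((k : ℝ) * Real.pi) := by
            rw [← hsin]; rw [hC, hcos']; ring
          exact mul_right_cancel₀ hcosk h3
        have hd'ne : d' ≠ Real.pi/2 := by
          intro h
          apply hcosd
          rw [hcos', h, Real.cos_pi_div_two, zero_mul]
        have hd'Ioo : d' ∈ Ioo (-(Real.pi/2)) (Real.pi/2) := by
          refine ⟨hmem.1, lt_of_le_of_ne ?_ hd'ne⟩
          have := hmem.2; linarith
        have hcospos : 0 < Real.cos d' := Real.cos_pos_of_mem_Ioo hd'Ioo
        have htan : Real.tan d' = t := by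
          rw [Real.tan_eq_sin_div_cos, hC']; field_simp
        have harct : Real.arctan t = d' := by
          rw [← htan, Real.arctan_tan hd'Ioo.1 hd'Ioo.2]
        refine ⟨θ₀ + 2 * d', ⟨?_, ?_⟩, ?_⟩
        · rw [hc₁]
          have := Real.arctan_strictMono.monotone ht.1
          rw [harct] at this; linarith
        · rw [hc₂]
          have := Real.arctan_strictMono.monotone ht.2
          rw [harct] at this; linarith
        · have hφeq : φ = (θ₀ + 2 * d') + (k : ℝ) * (2 * Real.pi) := by
            have : d = (φ - θ₀)/2 := hdd
            rw [hdk] at this; linarith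
          show ((θ₀ + 2 * d' : ℝ) : AddCircle (2 * Real.pi)) = (φ : AddCircle (2 * Real.pi))
          rw [hφeq]
          symm
          rw [QuotientAddGroup.eq_iff_sub_mem]
          have : (θ₀ + 2 * d') + (k : ℝ) * (2 * Real.pi) - (θ₀ + 2 * d') =
              k • (2 * Real.pi) := by rw [zsmul_eq_mul]; ring
          rw [this]
          exact AddSubgroup.zsmul_mem_zmultiples _ k
      · exact image_mono hJS
    rw [himg]
    exact (isConnected_Icc hc).image _ (AddCircle.continuous_mk' _).continuousOn
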